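/- Under the setting of equivariant gradient-descent training — F : P × ℝ^{m×d} → ℝ differentiable in C, T orthogonal, F'(B, C) = F(B, C T), iterates C_{i+1} = Cᵢ + θᵢ (∂F/∂C)(Bᵢ, Cᵢ), C'_{i+1} = C'ᵢ + θᵢ (∂F'/∂C)(B'ᵢ, C'ᵢ), matching B-updates, and initializations with C'₀ T = C₀ and B'₀ = B₀ — for any model f : P × ℝ^m → ℝ and any input w ∈ ℝ^d, the outputs after k steps agree on the transformed input: f(B'_k, C'_k (T w)) = f(B_k, C_k w). -/

import Mathlib

open Matrix

attribute [local instance] Matrix.normedAddCommGroup Matrix.normedSpace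

/-- The gradient `∂F/∂C` of an objective `F : P × ℝ^{m×d} → ℝ` with respect to its matrix
argument (w.r.t. the Frobenius inner product): the matrix of partial derivatives. -/
noncomputable def gradC {P : Type*} {m d : ℕ} (F : P → Matrix (Fin m) (Fin d) ℝ → ℝ)
    (B : P) (C : Matrix (Fin m) (Fin d) ℝ) : Matrix (Fin m) (Fin d) ℝ :=
  Matrix.of fun i j => fderiv ℝ (F B) C (Matrix.single i j 1)

/-- Key auxiliary lemma: the gradient of the transformed objective `F'(B,C) = F(B, C T)`
satisfies `(∂F'/∂C)(B,C) · T = (∂F/∂C)(B, C T)` when `T` is orthogonal. -/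
lemma gradC_mul_T {P : Type*} {m d : ℕ} (F : P → Matrix (Fin m) (Fin d) ℝ → ℝ)
    (hF : ∀ B : P, Differentiable ℝ (F B))
    (T : Matrix (Fin d) (Fin d) ℝ) (hT : Tᵀ * T = 1)
    (F' : P → Matrix (Fin m) (Fin d) ℝ → ℝ)
    (hF' : ∀ B C, F' B C = F B (C * T))
    (B : P) (C : Matrix (Fin m) (Fin d) ℝ) :
    gradC F' B C * T = gradC F B (C * T) := by
  classical
  -- right multiplication by T as a continuous linear map
  let L : Matrix (Fin m) (Fin d) ℝ →ₗ[ℝ] Matrix (Fin m) (Fin d) ℝ :=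
    { toFun := fun X => X * T
      map_add' := fun X Y => Matrix.add_mul X Y T
      map_smul' := fun r X => Matrix.smul_mul _ X T }
  let L' : Matrix (Fin m) (Fin d) ℝ →L[ℝ] Matrix (Fin m) (Fin d) ℝ :=
    L.toContinuousLinearMap
  have hFeq : F' B = (F B) ∘ (fun X => X * T) := by
    funext X; exact hF' B X
  have hderiv : HasFDerivAt (F' B) ((fderiv ℝ (F B) (C * T)).comp L') C := by
    rw [hFeq]
    exact ((hF B (C * T)).hasFDerivAt).comp C (L'.hasFDerivAt)
  have hfd : fderiv ℝ (F' B) C = (fderiv ℝ (F B) (C * T)).comp L' := hderiv.fderiv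
  ext i j
  have key : ∑ l, T l j • (Matrix.single i l (1:ℝ) * T) = Matrix.single i j (1:ℝ) := by
    ext a b
    simp only [Matrix.sum_apply, Matrix.smul_apply, smul_eq_mul, Matrix.mul_apply,
      Matrix.single, Matrix.of_apply, ite_and, boole_mul, Finset.sum_ite_eq,
      Finset.mem_univ, if_true]
    by_cases h : i = a
    · subst h
      simp only [if_true, boole_mul, Finset.sum_ite_eq, Finset.mem_univ]
      have hT' : ∑ l, T l j * T l b = (Tᵀ * T) j b := by
        simp [Matrix.mul_apply, Matrix.transpose_apply]
      rw [hT', hT, Matrix.one_apply]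
    · simp [h]
  calc (gradC F' B C * T) i j
      = ∑ l, fderiv ℝ (F B) (C * T) (Matrix.single i l (1:ℝ) * T) * T l j := by
        simp [gradC, Matrix.mul_apply, hfd, L', L]
    _ = fderiv ℝ (F B) (C * T) (∑ l, T l j • (Matrix.single i l (1:ℝ) * T)) := by
        rw [map_sum]
        congr 1; funext l
        rw [_root_.map_smul, smul_eq_mul, mul_comm]
    _ = gradC F B (C * T) i j := by rw [key]; rfl

/-- Under equivariant gradient-descent training (`F` differentiable in `C`, `T` orthogonal,
`F'(B,C) = F(B, C T)`, gradient-descent iterates for `C` with matching `B`-updates, and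
initializations `C'₀ T = C₀`, `B'₀ = B₀`), for any model `f : P × ℝ^m → ℝ` and any input
`w ∈ ℝ^d`, the outputs after `k` steps agree on the transformed input:
`f(B'_k, C'_k (T w)) = f(B_k, C_k w)`. -/
theorem gradient_descent_invariant_prediction {P : Type*} {m d : ℕ}
    (F : P → Matrix (Fin m) (Fin d) ℝ → ℝ)
    (hF : ∀ B : P, Differentiable ℝ (F B))
    (T : Matrix (Fin d) (Fin d) ℝ) (hT : Tᵀ * T = 1)
    (F' : P → Matrix (Fin m) (Fin d) ℝ → ℝ)
    (hF' : ∀ B C, F' B C = F B (C * T))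
    (k : ℕ) (θ : ℕ → ℝ)
    (Φ : (P → Matrix (Fin m) (Fin d) ℝ → ℝ) → P → Matrix (Fin m) (Fin d) ℝ → P)
    (hΦ : ∀ (B : P) (C : Matrix (Fin m) (Fin d) ℝ), Φ F' B C = Φ F B (C * T))
    (B B' : ℕ → P) (C C' : ℕ → Matrix (Fin m) (Fin d) ℝ)
    (hC : ∀ i, C (i + 1) = C i + θ i • gradC F (B i) (C i))
    (hB : ∀ i, B (i + 1) = Φ F (B i) (C i))
    (hC' : ∀ i, C' (i + 1) = C' i + θ i • gradC F' (B' i) (C' i))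
    (hB' : ∀ i, B' (i + 1) = Φ F' (B' i) (C' i))
    (hC0 : C' 0 * T = C 0) (hB0 : B' 0 = B 0)
    (f : P → (Fin m → ℝ) → ℝ) (w : Fin d → ℝ) :
    f (B' k) ((C' k).mulVec (T.mulVec w)) = f (B k) ((C k).mulVec w) := by
  have main : ∀ i, C' i * T = C i ∧ B' i = B i := by
    intro i
    induction i with
    | zero => exact ⟨hC0, hB0⟩
    | succ n ih =>
      obtain ⟨hCn, hBn⟩ := ih
      constructor
      · rw [hC' n, hC n, Matrix.add_mul, Matrix.smul_mul,
          gradC_mul_T F hF T hT F' hF', hCn, hBn]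
      · rw [hB' n, hB n, hΦ, hCn, hBn]
  obtain ⟨hCk, hBk⟩ := main k
  rw [Matrix.mulVec_mulVec, hCk, hBk]
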